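/- Let A be a bounded archimedean ℓ-algebra, let Y_A be the space of bal-morphisms A → ℝ topologized as a subspace of ℝ^A, let B(Y_A) be the ℓ-algebra of all bounded real-valued functions on Y_A with pointwise operations and order (which is a basic algebra), and let e : A → B(Y_A) be given by e(a)(α) = α(a). Then for every basic algebra C and every bal-morphism α : A → C, there is a unique normal homomorphism γ : B(Y_A) → C with γ ∘ e = α. Consequently, the basic algebras with normal homomorphisms form a (non-full) reflective subcategory of the bounded archimedean ℓ-algebras, with reflector the canonical extension A ↦ B(Y_A). -/

import Mathlib

/-- An ℓ-algebra: a commutative unital ℝ-algebra with a lattice order such that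
addition is translation-invariant, products of nonnegatives are nonnegative, and
scalar multiplication by nonnegative reals preserves nonnegativity. -/
class LAlg (A : Type*) extends CommRing A, Lattice A, Algebra ℝ A where
  add_le_add_right' : ∀ a b : A, a ≤ b → ∀ c : A, a + c ≤ b + c
  mul_nonneg' : ∀ a b : A, 0 ≤ a → 0 ≤ b → 0 ≤ a * b
  smul_nonneg' : ∀ (r : ℝ) (a : A), 0 ≤ r → 0 ≤ a → 0 ≤ r • a

/-- `A` is bounded: `1` is a strong order unit. -/
def LAlg.IsBounded (A : Type*) [LAlg A] : Prop := ∀ a : A, ∃ n : ℕ, a ≤ n • (1 : A)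

/-- `A` is archimedean. -/
def LAlg.IsArch (A : Type*) [LAlg A] : Prop := ∀ a b : A, (∀ n : ℕ, n • a ≤ b) → a ≤ 0

/-- The norm ‖a‖ = inf {r : ℝ | |a| ≤ r·1}, where |a| = a ⊔ -a. -/
noncomputable def lnorm {A : Type*} [LAlg A] (a : A) : ℝ := sInf {r : ℝ | a ⊔ -a ≤ r • (1 : A)}

/-- A bal-morphism: a unital ℝ-algebra homomorphism preserving binary joins. -/
def IsBalHom {A B : Type*} [LAlg A] [LAlg B] (α : A →ₐ[ℝ] B) : Prop :=
  ∀ a b : A, α (a ⊔ b) = α a ⊔ α b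

/-- ℝ is a bounded archimedean ℓ-algebra. -/
noncomputable instance : LAlg ℝ :=
  { (inferInstance : CommRing ℝ), (inferInstance : Lattice ℝ),
    (inferInstance : Algebra ℝ ℝ) with
    add_le_add_right' := fun _ _ h c => add_le_add h le_rfl
    mul_nonneg' := fun _ _ => mul_nonneg
    smul_nonneg' := fun _ _ => smul_nonneg }

/-- The Yosida space of A, realized as the set of bal-morphisms A → ℝ. -/
def YosidaSpace (A : Type*) [LAlg A] : Type _ :=
  {α : A →ₐ[ℝ] ℝ // IsBalHom α}

/-- The Yosida space is topologized as a subspace of ℝ^A with the product topology. -/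
noncomputable instance (A : Type*) [LAlg A] : TopologicalSpace (YosidaSpace A) :=
  TopologicalSpace.induced (fun (α : YosidaSpace A) (a : A) => α.1 a) inferInstance


/-- Dedekind completeness: every nonempty subset bounded above has a supremum. -/
def DedekindComplete (C : Type*) [LAlg C] : Prop :=
  ∀ S : Set C, S.Nonempty → BddAbove S → ∃ c : C, IsLUB S c

/-- `a` is an atom of the boolean algebra of idempotents (where `f ≤ e` iff `f * e = f`). -/
def IsIdemAtom {C : Type*} [LAlg C] (a : C) : Prop :=
  a * a = a ∧ a ≠ 0 ∧ ∀ f : C, f * f = f → f * a = f → f = 0 ∨ f = a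

/-- The boolean algebra of idempotents of `C` is atomic. -/
def IdemAtomic (C : Type*) [LAlg C] : Prop :=
  ∀ e : C, e * e = e → e ≠ 0 → ∃ a : C, IsIdemAtom a ∧ a * e = a

/-- A basic algebra: a Dedekind complete bounded archimedean ℓ-algebra whose boolean
algebra of idempotents is atomic. -/
def IsBasic (C : Type*) [LAlg C] : Prop :=
  LAlg.IsBounded C ∧ LAlg.IsArch C ∧ DedekindComplete C ∧ IdemAtomic C

/-- A normal homomorphism: a bal-morphism preserving all existing suprema and infima. -/
def IsNormal {A B : Type*} [LAlg A] [LAlg B] (γ : A →ₐ[ℝ] B) : Prop :=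
  IsBalHom γ ∧
  (∀ (S : Set A) (a : A), IsLUB S a → IsLUB (γ '' S) (γ a)) ∧
  (∀ (S : Set A) (a : A), IsGLB S a → IsGLB (γ '' S) (γ a))

/-- The ℝ-subalgebra of all bounded real-valued functions on a set `Y`, inside the
ℓ-algebra of all functions `Y → ℝ` with pointwise operations and order. -/
def BddFuns (Y : Type*) : Subalgebra ℝ (Y → ℝ) where
  carrier := {g : Y → ℝ | ∃ r : ℝ, ∀ y, |g y| ≤ r}
  one_mem' := ⟨1, fun y => by simp⟩
  zero_mem' := ⟨0, fun y => by simp⟩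
  add_mem' := by
    rintro a b ⟨r, hr⟩ ⟨s, hs⟩
    exact ⟨r + s, fun y => (abs_add_le _ _).trans (add_le_add (hr y) (hs y))⟩
  mul_mem' := by
    rintro a b ⟨r, hr⟩ ⟨s, hs⟩
    refine ⟨max r 0 * max s 0, fun y => ?_⟩
    rw [Pi.mul_apply, abs_mul]
    exact mul_le_mul ((hr y).trans (le_max_left _ _)) ((hs y).trans (le_max_left _ _))
      (abs_nonneg _) (le_max_right _ _)
  algebraMap_mem' := fun r => ⟨|r|, fun y => by simp [Pi.algebraMap_apply]⟩

/-- `B(Y)` is a sublattice of `Y → ℝ` (pointwise order). -/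
noncomputable instance (Y : Type*) : Lattice (BddFuns Y) :=
  Subtype.lattice
    (fun a b ha hb => by
      obtain ⟨r, hr⟩ := ha; obtain ⟨s, hs⟩ := hb
      refine ⟨max r s, fun y => ?_⟩
      have : (a ⊔ b) y = a y ⊔ b y := rfl
      rw [this]
      rcases le_total (a y) (b y) with h | h
      · rw [sup_eq_right.mpr h]; exact (hs y).trans (le_max_right _ _)
      · rw [sup_eq_left.mpr h]; exact (hr y).trans (le_max_left _ _))
    (fun a b ha hb => by
      obtain ⟨r, hr⟩ := ha; obtain ⟨s, hs⟩ := hb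
      refine ⟨max r s, fun y => ?_⟩
      have : (a ⊓ b) y = a y ⊓ b y := rfl
      rw [this]
      rcases le_total (a y) (b y) with h | h
      · rw [inf_eq_left.mpr h]; exact (hr y).trans (le_max_left _ _)
      · rw [inf_eq_right.mpr h]; exact (hs y).trans (le_max_right _ _))

/-- `B(Y)` is an ℓ-algebra with pointwise operations and order. -/
noncomputable instance (Y : Type*) : LAlg (BddFuns Y) :=
  { (inferInstance : CommRing (BddFuns Y)), (inferInstance : Lattice (BddFuns Y)),
    (inferInstance : Algebra ℝ (BddFuns Y)) with
    add_le_add_right' := by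
      intro a b h c
      intro y
      exact add_le_add (h y) le_rfl
    mul_nonneg' := by
      intro a b ha hb
      intro y
      exact mul_nonneg (ha y) (hb y)
    smul_nonneg' := by
      intro r a hr ha
      intro y
      exact smul_nonneg hr (ha y) }

/-- The canonical extension map e : A → B(Y_A), e(a)(α) = α(a). -/
noncomputable def eMap (A : Type) [LAlg A] (hb : LAlg.IsBounded A) :
    A → BddFuns (YosidaSpace A) :=
  fun a => ⟨fun α => α.1 a, by
    obtain ⟨n, hn⟩ := hb a
    obtain ⟨m, hm⟩ := hb (-a)
    have mono : ∀ (α : YosidaSpace A) (x y : A), x ≤ y → α.1 x ≤ α.1 y := by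
      intro α x y hxy
      have h := α.2 x y
      rw [sup_eq_right.mpr hxy] at h
      exact sup_eq_right.mp h.symm
    refine ⟨max n m, fun α => abs_le.mpr ⟨?_, ?_⟩⟩
    · have := mono α _ _ hm
      rw [map_neg, map_nsmul, map_one, nsmul_eq_mul, mul_one] at this
      linarith [le_max_right (n : ℝ) m]
    · have := mono α _ _ hn
      rw [map_nsmul, map_one, nsmul_eq_mul, mul_one] at this
      exact this.trans (le_max_left _ _)⟩

section LAlgLemmas
variable {C : Type*} [LAlg C]

instance (priority := 10) LAlg.toOrderedAddCommGroup : IsOrderedAddMonoid C :=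
  { add_le_add_left := fun a b h c => LAlg.add_le_add_right' a b h c }

lemma lalg_smul_nonneg {r : ℝ} {a : C} (hr : 0 ≤ r) (ha : 0 ≤ a) : 0 ≤ r • a :=
  LAlg.smul_nonneg' r a hr ha

lemma lalg_mul_nonneg {a b : C} (ha : 0 ≤ a) (hb : 0 ≤ b) : 0 ≤ a * b :=
  LAlg.mul_nonneg' a b ha hb

lemma lalg_mul_le_mul_right {a b : C} (h : a ≤ b) {c : C} (hc : 0 ≤ c) : a * c ≤ b * c := by
  have := lalg_mul_nonneg (sub_nonneg.mpr h) hc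
  rw [sub_mul] at this; exact sub_nonneg.mp this

lemma lalg_mul_le_mul_left {a b : C} (h : a ≤ b) {c : C} (hc : 0 ≤ c) : c * a ≤ c * b := by
  rw [mul_comm c a, mul_comm c b]; exact lalg_mul_le_mul_right h hc

lemma lalg_smul_le_smul {r s : ℝ} (h : r ≤ s) {a : C} (ha : 0 ≤ a) : r • a ≤ s • a := by
  have := lalg_smul_nonneg (sub_nonneg.mpr h) ha
  rw [sub_smul] at this; exact sub_nonneg.mp this

lemma lalg_smul_eq_zero {r : ℝ} {a : C} (hr : r ≠ 0) (h : r • a = 0) : a = 0 := by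
  have : r⁻¹ • (r • a) = a := by rw [smul_smul, inv_mul_cancel₀ hr, one_smul]
  rw [h, smul_zero] at this; exact this.symm

lemma lalg_scalar_le {q s : ℝ} {a : C} (ha : 0 ≤ a) (hne : a ≠ 0)
    (h : q • a ≤ s • a) : q ≤ s := by
  by_contra hqs
  push_neg at hqs
  have h1 : (q - s) • a ≤ 0 := by rw [sub_smul]; exact sub_nonpos.mpr h
  have h2 : 0 ≤ (q - s) • a := lalg_smul_nonneg (by linarith) ha
  exact hne (lalg_smul_eq_zero (sub_ne_zero.mpr (ne_of_gt hqs)) (le_antisymm h1 h2))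

/-- ℕ-smul coherence -/
lemma lalg_nsmul_cast (n : ℕ) (a : C) : (n : ℝ) • a = n • a :=
  Nat.cast_smul_eq_nsmul ℝ n a

/-- disjointness propagates to nsmul -/
lemma lalg_disj_nsmul {a b : C} (ha : 0 ≤ a) (hb : 0 ≤ b) (h : a ⊓ b = 0) :
    ∀ n : ℕ, (n • a) ⊓ b = 0 := by
  intro n
  induction n with
  | zero => simp [inf_eq_left.mpr hb]
  | succ n ih =>
    have hle : ((n+1) • a) ⊓ b - n • a ≤ a ⊓ b := by
      apply le_inf
      · have h0 : ((n+1) • a) ⊓ b ≤ a + n • a :=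
          le_trans inf_le_left (le_of_eq (by rw [succ_nsmul, add_comm]))
        exact sub_le_iff_le_add.mpr h0
      · have h1 : ((n+1) • a) ⊓ b ≤ b := inf_le_right
        have h2 : (0:C) ≤ n • a := nsmul_nonneg ha n
        calc ((n+1) • a) ⊓ b - n • a ≤ b - n • a := by exact sub_le_sub_right h1 _
          _ ≤ b := by simpa using sub_le_self b h2
    rw [h] at hle
    have h1 : ((n+1) • a) ⊓ b ≤ n • a := sub_nonpos.mp hle
    have h2 : ((n+1) • a) ⊓ b ≤ (n • a) ⊓ b := le_inf h1 inf_le_right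
    rw [ih] at h2
    have h3 : (0:C) ≤ ((n+1) • a) ⊓ b := le_inf (nsmul_nonneg ha (n+1)) hb
    exact le_antisymm h2 h3

lemma lalg_disj_nsmul' {a b : C} (ha : 0 ≤ a) (hb : 0 ≤ b) (h : a ⊓ b = 0) (n m : ℕ) :
    (n • a) ⊓ (m • b) = 0 := by
  have h1 : b ⊓ (n • a) = 0 := by rw [inf_comm]; exact lalg_disj_nsmul ha hb h n
  have := lalg_disj_nsmul hb (nsmul_nonneg ha n) h1 m
  rw [inf_comm] at this; exact this

end LAlgLemmas
section LAlgLemmas2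
variable {C : Type*} [LAlg C]

lemma lalg_posPart_inf (a : C) : a⁺ ⊓ a⁻ = 0 := posPart_inf_negPart_eq_zero a
lemma lalg_posPart_sub (a : C) : a⁺ - a⁻ = a := posPart_sub_negPart a

/-- unique decomposition into disjoint positives -/
lemma lalg_unique_decomp {u v : C} (hu : 0 ≤ u) (hv : 0 ≤ v) (h : u ⊓ v = 0) :
    (u - v)⁺ = u ∧ (u - v)⁻ = v := by
  have hsup : u ⊔ v = u + v := by
    have := inf_add_sup u v
    rw [h, zero_add] at this; exact this
  constructor
  · have h1 : (u - v) ⊔ (v - v) = (u ⊔ v) - v := (sup_sub u v v).symm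
    rw [sub_self] at h1
    rw [posPart_def, h1, hsup]; abel
  · have h1 : (v - u) ⊔ (u - u) = (v ⊔ u) - u := (sup_sub v u u).symm
    rw [sub_self] at h1
    rw [negPart_def, neg_sub, h1, sup_comm, hsup]; abel

/-- disjoint nonneg elements have zero product (needs boundedness) -/
lemma lalg_disj_mul (hbC : LAlg.IsBounded C) {a b : C} (ha : 0 ≤ a) (hb : 0 ≤ b)
    (h : a ⊓ b = 0) : a * b = 0 := by
  obtain ⟨n, hn⟩ := hbC a
  obtain ⟨m, hm⟩ := hbC b
  have h1 : a * b ≤ m • a := by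
    calc a * b ≤ a * (m • (1:C)) := lalg_mul_le_mul_left hm ha
      _ = m • a := by rw [mul_smul_comm, mul_one]
  have h2 : a * b ≤ n • b := by
    calc a * b ≤ (n • (1:C)) * b := lalg_mul_le_mul_right hn hb
      _ = n • b := by rw [smul_mul_assoc, one_mul]
  have h3 : a * b ≤ (m • a) ⊓ (n • b) := le_inf h1 h2
  rw [lalg_disj_nsmul' ha hb h m n] at h3
  exact le_antisymm h3 (lalg_mul_nonneg ha hb)

/-- squares are nonneg -/
lemma lalg_sq_nonneg (hbC : LAlg.IsBounded C) (a : C) : 0 ≤ a * a := by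
  have hd : a⁺ * a⁻ = 0 := lalg_disj_mul hbC (posPart_nonneg a) (negPart_nonneg a)
    (lalg_posPart_inf a)
  have heq : a * a = a⁺ * a⁺ + a⁻ * a⁻ := by
    calc a * a = (a⁺ - a⁻) * (a⁺ - a⁻) := by rw [lalg_posPart_sub]
      _ = a⁺ * a⁺ + a⁻ * a⁻ - 2 * (a⁺ * a⁻) := by ring
      _ = a⁺ * a⁺ + a⁻ * a⁻ := by rw [hd]; ring
  rw [heq]
  exact add_nonneg (lalg_mul_nonneg (posPart_nonneg a) (posPart_nonneg a))
    (lalg_mul_nonneg (negPart_nonneg a) (negPart_nonneg a))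

lemma lalg_one_nonneg (hbC : LAlg.IsBounded C) : (0:C) ≤ 1 := by
  simpa using lalg_sq_nonneg hbC (1:C)

/-- reducedness -/
lemma lalg_reduced (hbC : LAlg.IsBounded C) (haC : LAlg.IsArch C) {t : C} (ht : 0 ≤ t)
    (h : t * t = 0) : t = 0 := by
  set s := t ⊓ 1 with hs
  have hs0 : 0 ≤ s := le_inf ht (lalg_one_nonneg hbC)
  have hst : s ≤ t := inf_le_left
  have hs1 : s ≤ 1 := inf_le_right
  have hss : s * s = 0 := by
    have h1 : s * s ≤ t * s := lalg_mul_le_mul_right hst hs0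
    have h2 : t * s ≤ t * t := lalg_mul_le_mul_left hst ht
    exact le_antisymm (by rw [h] at h2; exact h1.trans h2) (lalg_mul_nonneg hs0 hs0)
  have hpow : ∀ k : ℕ, (1 - s)^k = 1 - k • s ∧ (0:C) ≤ (1-s)^k := by
    intro k
    induction k with
    | zero => exact ⟨by simp, by simpa using lalg_one_nonneg hbC⟩
    | succ k ih =>
      have he : (1-s)^(k+1) = 1 - (k+1) • s := by
        rw [pow_succ, ih.1]
        have heq2 : (1 - k • s) * (1 - s) = 1 - k • s - s + (k • s) * s := by ring
        rw [heq2]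
        have hz : (k • s) * s = 0 := by
          rw [smul_mul_assoc, hss, smul_zero]
        rw [hz, add_zero, succ_nsmul]
        abel
      exact ⟨he, by rw [pow_succ]; exact lalg_mul_nonneg ih.2 (sub_nonneg.mpr hs1)⟩
  have hks : ∀ k : ℕ, k • s ≤ 1 := by
    intro k
    exact sub_nonneg.mp (by rw [← (hpow k).1]; exact (hpow k).2)
  have hs0' : s ≤ 0 := haC s 1 hks
  have hseq : s = 0 := le_antisymm hs0' hs0
  obtain ⟨m, hm⟩ := hbC t
  have h1 : t ⊓ (m • (1:C)) = 0 := by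
    have := lalg_disj_nsmul (lalg_one_nonneg hbC) ht (by rw [inf_comm]; exact hseq) m
    rw [inf_comm] at this; exact this
  have h2 : t = t ⊓ (m • 1) := (inf_eq_left.mpr hm).symm
  rw [h2, h1]

/-- zero product of nonnegs implies disjoint -/
lemma lalg_mul_eq_zero_disj (hbC : LAlg.IsBounded C) (haC : LAlg.IsArch C) {a b : C}
    (ha : 0 ≤ a) (hb : 0 ≤ b) (h : a * b = 0) : a ⊓ b = 0 := by
  set t := a ⊓ b with hts
  have ht : 0 ≤ t := le_inf ha hb
  have htt : t * t = 0 := by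
    have h1 : t * t ≤ a * t := lalg_mul_le_mul_right inf_le_left ht
    have h2 : a * t ≤ a * b := lalg_mul_le_mul_left inf_le_right ha
    rw [h] at h2
    exact le_antisymm (h1.trans h2) (lalg_mul_nonneg ht ht)
  exact lalg_reduced hbC haC ht htt

/-- idempotents lie between 0 and 1 -/
lemma lalg_idem_nonneg (hbC : LAlg.IsBounded C) {e : C} (he : e * e = e) : 0 ≤ e := by
  have := lalg_sq_nonneg hbC e; rwa [he] at this

lemma lalg_idem_le_one (hbC : LAlg.IsBounded C) {e : C} (he : e * e = e) : e ≤ 1 := by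
  have h2 : (1-e) * (1-e) = 1 - e := by
    have : (1-e) * (1-e) = 1 - 2*e + e*e := by ring
    rw [this, he]; ring
  exact sub_nonneg.mp (lalg_idem_nonneg hbC h2)

/-- distributivity of inf over an existing LUB -/
lemma lalg_isLUB_inf_le {S : Set C} {u x w : C} (hu : IsLUB S u)
    (h : ∀ s ∈ S, s ⊓ x ≤ w) : u ⊓ x ≤ w := by
  have key : ∀ p : C, p ⊓ x = p + x - (p ⊔ x) := fun p => eq_sub_of_add_eq (inf_add_sup p x)
  have hub : ∀ s ∈ S, s ≤ (w + (u ⊔ x)) - x := by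
    intro s hs
    have h1 : (s + x) - (s ⊔ x) ≤ w := (key s) ▸ h s hs
    have h2 : s + x ≤ w + (s ⊔ x) := sub_le_iff_le_add.mp h1
    have h3 : s + x ≤ w + (u ⊔ x) := h2.trans (add_le_add_right (sup_le_sup_right (hu.1 hs) x) w)
    exact le_sub_iff_add_le.mpr h3
  have h4 : u ≤ (w + (u ⊔ x)) - x := hu.2 hub
  rw [key u]
  have h5 : u + x ≤ w + (u ⊔ x) := le_sub_iff_add_le.mp h4
  exact sub_le_iff_le_add.mpr h5

end LAlgLemmas2
section BasicStructure
variable {C : Type*} [LAlg C]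

/-- Archimedean: a nonzero nonneg element stays nonzero after subtracting a small constant. -/
lemma lalg_arch_pos (hbC : LAlg.IsBounded C) (haC : LAlg.IsArch C) {c : C} (hc : 0 ≤ c)
    (hne : c ≠ 0) : ∃ ε : ℝ, 0 < ε ∧ (c - ε • (1:C))⁺ ≠ 0 := by
  by_contra h
  push_neg at h
  have hle : ∀ ε : ℝ, 0 < ε → c ≤ ε • (1:C) := by
    intro ε hε
    have := h ε hε
    rw [posPart_eq_zero] at this
    exact sub_nonpos.mp this
  have hks : ∀ k : ℕ, k • c ≤ 1 := by
    intro k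
    rcases Nat.eq_zero_or_pos k with hk | hk
    · simp [hk, lalg_one_nonneg hbC]
    · have hkpos : (0:ℝ) < (k:ℝ) := by exact_mod_cast hk
      have h1 : c ≤ ((k:ℝ))⁻¹ • (1:C) := hle _ (by positivity)
      have h2 : (k:ℝ) • c ≤ (k:ℝ) • (((k:ℝ))⁻¹ • (1:C)) := by
        have := lalg_smul_nonneg (le_of_lt hkpos) (sub_nonneg.mpr h1)
        rw [smul_sub] at this
        exact sub_nonneg.mp this
      rw [smul_smul, mul_inv_cancel₀ (ne_of_gt hkpos), one_smul] at h2
      rwa [lalg_nsmul_cast] at h2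
  exact hne (le_antisymm (haC c 1 hks) hc)

/-- Support idempotent of a nonnegative element. -/
lemma lalg_supp (hbC : LAlg.IsBounded C) (haC : LAlg.IsArch C) (hDC : DedekindComplete C)
    {d : C} (hd : 0 ≤ d) :
    ∃ e : C, e * e = e ∧ d * e = d ∧ (∀ x : C, 0 ≤ x → x ⊓ d = 0 → x * e = 0) ∧
      (d ≠ 0 → e ≠ 0) := by
  set E : Set C := Set.range (fun k : ℕ => (k • d) ⊓ 1) with hE
  have h0mem : (0:C) ∈ E := ⟨0, by simp [inf_eq_left.mpr (lalg_one_nonneg hbC)]⟩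
  have hbdd : BddAbove E := ⟨1, by rintro _ ⟨k, rfl⟩; exact inf_le_right⟩
  obtain ⟨e, he⟩ := hDC E ⟨0, h0mem⟩ hbdd
  have he0 : 0 ≤ e := he.1 h0mem
  have he1 : e ≤ 1 := he.2 (by rintro _ ⟨k, rfl⟩; exact inf_le_right)
  -- d ⊓ (1 - e) = 0
  have ht0 : 0 ≤ d ⊓ (1 - e) := le_inf hd (sub_nonneg.mpr he1)
  have hkt : ∀ k : ℕ, k • (d ⊓ (1 - e)) ≤ 1 := by
    intro k
    induction k with
    | zero => simpa using lalg_one_nonneg hbC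
    | succ k ih =>
      have h1 : k • (d ⊓ (1-e)) ≤ k • d := nsmul_le_nsmul_right inf_le_left k
      have h3 : k • (d ⊓ (1-e)) ≤ e := (le_inf h1 ih).trans (he.1 ⟨k, rfl⟩)
      calc (k+1) • (d ⊓ (1-e)) = k • (d ⊓ (1-e)) + (d ⊓ (1-e)) := by rw [succ_nsmul]
        _ ≤ e + (1 - e) := add_le_add h3 inf_le_right
        _ = 1 := by abel
  have hdisj : d ⊓ (1 - e) = 0 :=
    le_antisymm (haC _ 1 hkt) ht0
  have hmul : d * (1 - e) = 0 :=
    lalg_disj_mul hbC hd (sub_nonneg.mpr he1) hdisj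
  have hde : d * e = d := by
    have h1 : d * 1 - d * e = 0 := by rw [← mul_sub]; exact hmul
    rw [mul_one] at h1
    exact (sub_eq_zero.mp h1).symm
  have hP3 : ∀ x : C, 0 ≤ x → x ⊓ d = 0 → x * e = 0 := by
    intro x hx hxd
    have hxk : ∀ s ∈ E, s ⊓ x ≤ 0 := by
      rintro _ ⟨k, rfl⟩
      have h1 : (k • d) ⊓ x = 0 := by
        have := lalg_disj_nsmul hd hx (by rw [inf_comm]; exact hxd) k
        exact this
      calc ((k • d) ⊓ 1) ⊓ x ≤ (k • d) ⊓ x := inf_le_inf_right x inf_le_left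
        _ = 0 := h1
    have h2 : e ⊓ x ≤ 0 := lalg_isLUB_inf_le he hxk
    have h3 : e ⊓ x = 0 := le_antisymm h2 (le_inf he0 hx)
    have := lalg_disj_mul hbC he0 hx h3
    rw [mul_comm] at this; exact this
  have hee : e * e = e := by
    have h1 : (1 - e) * e = 0 := hP3 (1 - e) (sub_nonneg.mpr he1) (by rw [inf_comm]; exact hdisj)
    have h2 : 1 * e - e * e = 0 := by rw [← sub_mul]; exact h1
    rw [one_mul] at h2
    exact (sub_eq_zero.mp h2).symm
  refine ⟨e, hee, hde, hP3, fun hdne hez => hdne ?_⟩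
  rw [hez, mul_zero] at hde; exact hde.symm

lemma lalg_atom_nonneg (hbC : LAlg.IsBounded C) {a : C} (ha : IsIdemAtom a) : 0 ≤ a :=
  lalg_idem_nonneg hbC ha.1

lemma lalg_atom_le_one (hbC : LAlg.IsBounded C) {a : C} (ha : IsIdemAtom a) : a ≤ 1 :=
  lalg_idem_le_one hbC ha.1

/-- a nonnegative element supported on an atom dominates a positive multiple of it -/
lemma lalg_atom_lower (hbC : LAlg.IsBounded C) (haC : LAlg.IsArch C)
    (hDC : DedekindComplete C) {a p : C} (hatom : IsIdemAtom a) (hp : 0 ≤ p)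
    (hpa : p * (1 - a) = 0) (hpne : p ≠ 0) : ∃ ε : ℝ, 0 < ε ∧ ε • a ≤ p := by
  obtain ⟨ε, hε, hDne⟩ := lalg_arch_pos hbC haC hp hpne
  set D := (p - ε • (1:C))⁺ with hD
  have hD0 : 0 ≤ D := posPart_nonneg _
  obtain ⟨e', he'idem, he'D, he'P3, he'ne⟩ := lalg_supp hbC haC hDC hD0
  have he'0 := he'ne hDne
  have h1a : (0:C) ≤ 1 - a := sub_nonneg.mpr (lalg_atom_le_one hbC hatom)
  have hDlep : D ≤ p := by
    apply sup_le
    · exact sub_le_self p (lalg_smul_nonneg (le_of_lt hε) (lalg_one_nonneg hbC))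
    · exact hp
  have hD1a : D * (1 - a) = 0 := by
    have h1 : D * (1-a) ≤ p * (1-a) := lalg_mul_le_mul_right hDlep h1a
    rw [hpa] at h1
    exact le_antisymm h1 (lalg_mul_nonneg hD0 h1a)
  have hdisj : (1 - a) ⊓ D = 0 := by
    rw [inf_comm]; exact lalg_mul_eq_zero_disj hbC haC hD0 h1a hD1a
  have h1ae : (1 - a) * e' = 0 := he'P3 (1-a) h1a hdisj
  have he'a : e' * a = e' := by
    have h2 : 1 * e' - a * e' = 0 := by rw [← sub_mul]; exact h1ae
    rw [one_mul] at h2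
    have := sub_eq_zero.mp h2
    rw [mul_comm] at this
    exact this.symm
  have he'eq : e' = a := by
    rcases hatom.2.2 e' he'idem he'a with h | h
    · exact absurd h he'0
    · exact h
  -- negative part is killed by e' = a
  set D2 := (p - ε • (1:C))⁻ with hD2
  have hD20 : 0 ≤ D2 := negPart_nonneg _
  have hD2e' : D2 * e' = 0 := he'P3 D2 hD20 (by rw [inf_comm]; exact lalg_posPart_inf _)
  have hD2a : D2 * a = 0 := by rw [← he'eq]; exact hD2e'
  have hkey : p * a - ε • a = D * a := by
    have h1 : (p - ε • (1:C)) * a = D * a - D2 * a := by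
      rw [← sub_mul, lalg_posPart_sub]
    rw [hD2a, sub_zero] at h1
    rw [← h1, sub_mul, smul_mul_assoc, one_mul]
  have hpa' : p * a = p := by
    have h2 : p * 1 - p * a = 0 := by rw [← mul_sub]; exact hpa
    rw [mul_one] at h2
    exact (sub_eq_zero.mp h2).symm
  have hfin : ε • a ≤ p := by
    have h3 : 0 ≤ D * a := lalg_mul_nonneg hD0 (lalg_atom_nonneg hbC hatom)
    rw [← hkey, hpa'] at h3
    exact sub_nonneg.mp h3
  exact ⟨ε, hε, hfin⟩

end BasicStructure
section Coord
variable {C : Type*} [LAlg C]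

lemma lalg_coord_exists (hbC : LAlg.IsBounded C) (haC : LAlg.IsArch C)
    (hDC : DedekindComplete C) {a : C} (hatom : IsIdemAtom a) (c : C) :
    ∃! r : ℝ, c * a = r • a := by
  have ha0 : 0 ≤ a := lalg_atom_nonneg hbC hatom
  have ha1 : a ≤ 1 := lalg_atom_le_one hbC hatom
  have hane : a ≠ 0 := hatom.2.1
  obtain ⟨n, hn⟩ := hbC c
  obtain ⟨m, hm⟩ := hbC (-c)
  have hub : c * a ≤ (n:ℝ) • a := by
    calc c * a ≤ (n • (1:C)) * a := lalg_mul_le_mul_right hn ha0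
      _ = n • a := by rw [smul_mul_assoc, one_mul]
      _ = (n:ℝ) • a := (lalg_nsmul_cast n a).symm
  have hlb : (-(m:ℝ)) • a ≤ c * a := by
    have h1 : (-c) * a ≤ (m:ℝ) • a := by
      calc (-c) * a ≤ (m • (1:C)) * a := lalg_mul_le_mul_right hm ha0
        _ = m • a := by rw [smul_mul_assoc, one_mul]
        _ = (m:ℝ) • a := (lalg_nsmul_cast m a).symm
    rw [neg_mul] at h1
    have := neg_le_neg h1
    rw [neg_neg] at this
    rwa [neg_smul]
  set Sset : Set ℝ := {q : ℝ | q • a ≤ c * a} with hSset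
  have hSne : Sset.Nonempty := ⟨-(m:ℝ), hlb⟩
  have hSbdd : BddAbove Sset := by
    refine ⟨(n:ℝ), fun q hq => ?_⟩
    exact lalg_scalar_le ha0 hane (hq.trans hub)
  set r := sSup Sset with hr
  set d := c * a - r • a with hd
  have hd1a : d * (1 - a) = 0 := by
    have h1 : (c * a) * (1 - a) = 0 := by
      have haa : a * (1 - a) = 0 := by
        rw [mul_sub, mul_one, hatom.1, sub_self]
      rw [mul_assoc, haa, mul_zero]
    have h2 : (r • a) * (1 - a) = 0 := by
      rw [smul_mul_assoc]
      have haa : a * (1 - a) = 0 := by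
        rw [mul_sub, mul_one, hatom.1, sub_self]
      rw [haa, smul_zero]
    rw [hd, sub_mul, h1, h2, sub_zero]
  have hparts : d⁺ * (1 - a) = 0 ∧ d⁻ * (1 - a) = 0 := by
    have h1a : (0:C) ≤ 1 - a := sub_nonneg.mpr ha1
    have heqw : d⁺ * (1 - a) = d⁻ * (1 - a) := by
      have h1 : (d⁺ - d⁻) * (1 - a) = 0 := by rw [lalg_posPart_sub]; exact hd1a
      rw [sub_mul] at h1
      exact sub_eq_zero.mp h1
    have hw0 : 0 ≤ d⁺ * (1 - a) := lalg_mul_nonneg (posPart_nonneg d) h1a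
    have hwlep : d⁺ * (1 - a) ≤ d⁺ := by
      have := lalg_mul_le_mul_left (sub_le_self (1:C) ha0) (posPart_nonneg d)
      rwa [mul_one] at this
    have hwlem : d⁺ * (1 - a) ≤ d⁻ := by
      rw [heqw]
      have := lalg_mul_le_mul_left (sub_le_self (1:C) ha0) (negPart_nonneg d)
      rwa [mul_one] at this
    have hw : d⁺ * (1 - a) = 0 := by
      have := le_inf hwlep hwlem
      rw [lalg_posPart_inf] at this
      exact le_antisymm this hw0
    exact ⟨hw, by rw [← heqw]; exact hw⟩
  have hlow : ∀ p : C, 0 ≤ p → p * (1 - a) = 0 → p ≠ 0 → ∃ ε : ℝ, 0 < ε ∧ ε • a ≤ p :=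
    fun p hp hpa hpne => lalg_atom_lower hbC haC hDC hatom hp hpa hpne
  have hmain : d = 0 := by
    by_cases hdm : d⁻ = 0
    · by_cases hdp : d⁺ = 0
      · rw [← lalg_posPart_sub d, hdm, hdp, sub_zero]
      · obtain ⟨ε, hε, hεa⟩ := hlow d⁺ (posPart_nonneg d) hparts.1 hdp
        exfalso
        have hdpos : ε • a ≤ d := by
          rw [← lalg_posPart_sub d, hdm, sub_zero]; exact hεa
        have hmem : (r + ε) ∈ Sset := by
          show (r + ε) • a ≤ c * a
          have : c * a = r • a + d := by rw [hd]; abel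
          rw [this, add_smul]
          exact add_le_add_right hdpos _
        have := le_csSup hSbdd hmem
        linarith
    · obtain ⟨ε, hε, hεa⟩ := hlow d⁻ (negPart_nonneg d) hparts.2 hdm
      exfalso
      have hdp : d⁺ = 0 := by
        by_contra hdp
        obtain ⟨ε', hε', hεa'⟩ := hlow d⁺ (posPart_nonneg d) hparts.1 hdp
        have h1 : (min ε ε') • a ≤ d⁺ ⊓ d⁻ :=
          le_inf ((lalg_smul_le_smul (min_le_right ε ε') ha0).trans hεa')
            ((lalg_smul_le_smul (min_le_left ε ε') ha0).trans hεa)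
        rw [lalg_posPart_inf] at h1
        have h2 : 0 ≤ (min ε ε') • a := lalg_smul_nonneg (le_of_lt (lt_min hε hε')) ha0
        exact hane (lalg_smul_eq_zero (ne_of_gt (lt_min hε hε')) (le_antisymm h1 h2))
      have hdneg : d ≤ (-ε) • a := by
        rw [← lalg_posPart_sub d, hdp, zero_sub, neg_smul]
        exact neg_le_neg hεa
      have hub2 : ∀ q ∈ Sset, q ≤ r - ε := by
        intro q hq
        have h1 : q • a ≤ (r - ε) • a := by
          have : c * a = r • a + d := by rw [hd]; abel
          calc q • a ≤ c * a := hq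
            _ = r • a + d := this
            _ ≤ r • a + (-ε) • a := add_le_add_right hdneg _
            _ = (r - ε) • a := by rw [← add_smul]; ring_nf
        exact lalg_scalar_le ha0 hane h1
      have := csSup_le hSne hub2
      linarith
  have hceq : c * a = r • a := by
    have := hmain; rw [hd] at this; exact sub_eq_zero.mp this
  refine ⟨r, hceq, fun s hs => ?_⟩
  by_contra hsr
  have h1 : (s - r) • a = 0 := by
    rw [sub_smul, ← hs, ← hceq, sub_self]
  exact hane (lalg_smul_eq_zero (sub_ne_zero.mpr hsr) h1)

/-- The coordinate of `c` at an atom `a`. -/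
noncomputable def lalgCoord (hbC : LAlg.IsBounded C) (haC : LAlg.IsArch C)
    (hDC : DedekindComplete C) {a : C} (hatom : IsIdemAtom a) (c : C) : ℝ :=
  (lalg_coord_exists hbC haC hDC hatom c).exists.choose

lemma lalgCoord_spec (hbC : LAlg.IsBounded C) (haC : LAlg.IsArch C)
    (hDC : DedekindComplete C) {a : C} (hatom : IsIdemAtom a) (c : C) :
    c * a = (lalgCoord hbC haC hDC hatom c) • a :=
  (lalg_coord_exists hbC haC hDC hatom c).exists.choose_spec

lemma lalgCoord_eq (hbC : LAlg.IsBounded C) (haC : LAlg.IsArch C)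
    (hDC : DedekindComplete C) {a : C} (hatom : IsIdemAtom a) {c : C} {r : ℝ}
    (h : c * a = r • a) : lalgCoord hbC haC hDC hatom c = r := by
  have h1 := lalgCoord_spec hbC haC hDC hatom c
  by_contra hne
  have h2 : (lalgCoord hbC haC hDC hatom c - r) • a = 0 := by
    rw [sub_smul, ← h1, ← h, sub_self]
  exact hatom.2.1 (lalg_smul_eq_zero (sub_ne_zero.mpr hne) h2)

end Coord
section CoordHom
variable {C : Type*} [LAlg C]

lemma lalgCoord_add (hbC : LAlg.IsBounded C) (haC : LAlg.IsArch C) (hDC : DedekindComplete C) {a : C} (hatom : IsIdemAtom a) (c c' : C) :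
    lalgCoord hbC haC hDC hatom (c + c') =
      lalgCoord hbC haC hDC hatom c + lalgCoord hbC haC hDC hatom c' := by
  apply lalgCoord_eq
  rw [add_mul, lalgCoord_spec hbC haC hDC hatom c, lalgCoord_spec hbC haC hDC hatom c',
    add_smul]

lemma lalgCoord_mul (hbC : LAlg.IsBounded C) (haC : LAlg.IsArch C) (hDC : DedekindComplete C) {a : C} (hatom : IsIdemAtom a) (c c' : C) :
    lalgCoord hbC haC hDC hatom (c * c') =
      lalgCoord hbC haC hDC hatom c * lalgCoord hbC haC hDC hatom c' := by
  apply lalgCoord_eq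
  calc (c * c') * a = c * (c' * a) := by ring
    _ = c * ((lalgCoord hbC haC hDC hatom c') • a) := by
        rw [lalgCoord_spec hbC haC hDC hatom c']
    _ = (lalgCoord hbC haC hDC hatom c') • (c * a) := (mul_smul_comm _ _ _)
    _ = (lalgCoord hbC haC hDC hatom c') • ((lalgCoord hbC haC hDC hatom c) • a) := by
        rw [lalgCoord_spec hbC haC hDC hatom c]
    _ = (lalgCoord hbC haC hDC hatom c * lalgCoord hbC haC hDC hatom c') • a := by
        rw [smul_smul, mul_comm]

lemma lalgCoord_one (hbC : LAlg.IsBounded C) (haC : LAlg.IsArch C) (hDC : DedekindComplete C) {a : C} (hatom : IsIdemAtom a) :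
    lalgCoord hbC haC hDC hatom (1:C) = 1 := by
  apply lalgCoord_eq; rw [one_mul, one_smul]

lemma lalgCoord_algebraMap (hbC : LAlg.IsBounded C) (haC : LAlg.IsArch C) (hDC : DedekindComplete C) {a : C} (hatom : IsIdemAtom a) (s : ℝ) :
    lalgCoord hbC haC hDC hatom ((algebraMap ℝ C) s) = s := by
  apply lalgCoord_eq
  rw [Algebra.algebraMap_eq_smul_one, smul_mul_assoc, one_mul]

lemma lalgCoord_zero (hbC : LAlg.IsBounded C) (haC : LAlg.IsArch C) (hDC : DedekindComplete C) {a : C} (hatom : IsIdemAtom a) :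
    lalgCoord hbC haC hDC hatom (0:C) = 0 := by
  apply lalgCoord_eq; rw [zero_mul, zero_smul]

/-- positive part commutes with multiplication by an idempotent -/
lemma lalg_posPart_mul_idem (hbC : LAlg.IsBounded C) (haC : LAlg.IsArch C) {e : C} (he : e * e = e) (w : C) :
    (w * e)⁺ = w⁺ * e := by
  have he0 : 0 ≤ e := lalg_idem_nonneg hbC he
  have hu : 0 ≤ w⁺ * e := lalg_mul_nonneg (posPart_nonneg w) he0
  have hv : 0 ≤ w⁻ * e := lalg_mul_nonneg (negPart_nonneg w) he0
  have hprod : (w⁺ * e) * (w⁻ * e) = 0 := by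
    have h1 : w⁺ * w⁻ = 0 :=
      lalg_disj_mul hbC (posPart_nonneg w) (negPart_nonneg w) (lalg_posPart_inf w)
    calc (w⁺ * e) * (w⁻ * e) = (w⁺ * w⁻) * (e * e) := by ring
      _ = 0 := by rw [h1, zero_mul]
  have hdisj : (w⁺ * e) ⊓ (w⁻ * e) = 0 := lalg_mul_eq_zero_disj hbC haC hu hv hprod
  have hsub : (w⁺ * e) - (w⁻ * e) = w * e := by rw [← sub_mul, lalg_posPart_sub]
  have := (lalg_unique_decomp hu hv hdisj).1
  rw [hsub] at this
  exact this

lemma lalg_smul_sup {r s : ℝ} {a : C} (ha : 0 ≤ a) :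
    (r • a) ⊔ (s • a) = (max r s) • a := by
  rcases le_total r s with h | h
  · rw [sup_eq_right.mpr (lalg_smul_le_smul h ha), max_eq_right h]
  · rw [sup_eq_left.mpr (lalg_smul_le_smul h ha), max_eq_left h]

lemma lalg_sup_mul_idem (hbC : LAlg.IsBounded C) (haC : LAlg.IsArch C) {e : C} (he : e * e = e) (c c' : C) :
    (c ⊔ c') * e = (c * e) ⊔ (c' * e) := by
  have hkey : ∀ p q : C, p ⊔ q = p + (q - p)⁺ := by
    intro p q
    rw [posPart_def, add_sup, add_zero, add_sub_cancel, sup_comm]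
  rw [hkey c c', add_mul, ← lalg_posPart_mul_idem hbC haC he (c' - c), sub_mul,
    ← hkey (c * e) (c' * e)]

lemma lalgCoord_sup (hbC : LAlg.IsBounded C) (haC : LAlg.IsArch C) (hDC : DedekindComplete C) {a : C} (hatom : IsIdemAtom a) (c c' : C) :
    lalgCoord hbC haC hDC hatom (c ⊔ c') =
      max (lalgCoord hbC haC hDC hatom c) (lalgCoord hbC haC hDC hatom c') := by
  apply lalgCoord_eq
  rw [lalg_sup_mul_idem hbC haC hatom.1, lalgCoord_spec hbC haC hDC hatom c,
    lalgCoord_spec hbC haC hDC hatom c',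
    lalg_smul_sup (lalg_atom_nonneg hbC hatom)]

lemma lalgCoord_mono (hbC : LAlg.IsBounded C) (haC : LAlg.IsArch C) (hDC : DedekindComplete C) {a : C} (hatom : IsIdemAtom a) {c c' : C} (h : c ≤ c') :
    lalgCoord hbC haC hDC hatom c ≤ lalgCoord hbC haC hDC hatom c' := by
  have h1 := lalgCoord_sup hbC haC hDC hatom c c'
  rw [sup_eq_right.mpr h] at h1
  rw [h1]
  exact le_max_left _ _

lemma lalgCoord_neg (hbC : LAlg.IsBounded C) (haC : LAlg.IsArch C) (hDC : DedekindComplete C) {a : C} (hatom : IsIdemAtom a) (c : C) :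
    lalgCoord hbC haC hDC hatom (-c) = -lalgCoord hbC haC hDC hatom c := by
  have := lalgCoord_add hbC haC hDC hatom c (-c)
  rw [add_neg_cancel, lalgCoord_zero] at this
  linarith

lemma lalgCoord_posPart (hbC : LAlg.IsBounded C) (haC : LAlg.IsArch C) (hDC : DedekindComplete C) {a : C} (hatom : IsIdemAtom a) (c : C) :
    lalgCoord hbC haC hDC hatom (c⁺) = (lalgCoord hbC haC hDC hatom c)⁺ := by
  rw [posPart_def, posPart_def, lalgCoord_sup hbC haC hDC hatom, lalgCoord_zero]

/-- detection of positivity on atoms -/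
lemma lalg_eq_zero_of_coords (hbC : LAlg.IsBounded C) (haC : LAlg.IsArch C) (hDC : DedekindComplete C) (hAt : IdemAtomic C) {c : C} (hc : 0 ≤ c)
    (h : ∀ a : C, IsIdemAtom a → c * a = 0) : c = 0 := by
  by_contra hne
  obtain ⟨ε, hε, hDne⟩ := lalg_arch_pos hbC haC hc hne
  set D := (c - ε • (1:C))⁺ with hD
  obtain ⟨e, heidem, heD, heP3, hene⟩ := lalg_supp hbC haC hDC (posPart_nonneg _)
  have he0 := hene hDne
  obtain ⟨a, hatom, hae⟩ := hAt e heidem he0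
  set D2 := (c - ε • (1:C))⁻ with hD2
  have hD2e : D2 * e = 0 :=
    heP3 D2 (negPart_nonneg _) (by rw [inf_comm]; exact lalg_posPart_inf _)
  have hD2a : D2 * a = 0 := by
    calc D2 * a = D2 * (a * e) := by rw [hae]
      _ = (D2 * e) * a := by ring
      _ = 0 := by rw [hD2e, zero_mul]
  have hkey : c * a - ε • a = D * a := by
    have h1 : (c - ε • (1:C)) * a = D * a - D2 * a := by
      rw [← sub_mul, lalg_posPart_sub]
    rw [hD2a, sub_zero] at h1
    rw [← h1, sub_mul, smul_mul_assoc, one_mul]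
  have h2 : 0 ≤ D * a := lalg_mul_nonneg (posPart_nonneg _) (lalg_atom_nonneg hbC hatom)
  rw [← hkey, h a hatom, zero_sub] at h2
  have h3 : ε • a ≤ 0 := by
    have := neg_le_neg h2
    simpa using this
  have h4 : (0:C) ≤ ε • a := lalg_smul_nonneg (le_of_lt hε) (lalg_atom_nonneg hbC hatom)
  exact hatom.2.1 (lalg_smul_eq_zero (ne_of_gt hε) (le_antisymm h3 h4))

lemma lalg_le_of_coords (hbC : LAlg.IsBounded C) (haC : LAlg.IsArch C) (hDC : DedekindComplete C) (hAt : IdemAtomic C) {c c' : C}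
    (h : ∀ (a : C) (ha : IsIdemAtom a),
      lalgCoord hbC haC hDC ha c ≤ lalgCoord hbC haC hDC ha c') : c ≤ c' := by
  have hz : (c - c')⁺ = 0 := by
    apply lalg_eq_zero_of_coords hbC haC hDC hAt (posPart_nonneg _)
    intro a ha
    have h1 : lalgCoord hbC haC hDC ha ((c - c')⁺) = 0 := by
      rw [lalgCoord_posPart hbC haC hDC ha]
      have h2 : lalgCoord hbC haC hDC ha (c - c') ≤ 0 := by
        have h3 := lalgCoord_add hbC haC hDC ha (c - c') c'
        rw [sub_add_cancel] at h3
        have := h a ha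
        linarith
      simpa [posPart_eq_zero] using h2
    have := lalgCoord_spec hbC haC hDC ha ((c - c')⁺)
    rw [h1, zero_smul] at this
    exact this
  rw [posPart_eq_zero] at hz
  exact sub_nonpos.mp hz

lemma lalg_eq_of_coords (hbC : LAlg.IsBounded C) (haC : LAlg.IsArch C) (hDC : DedekindComplete C) (hAt : IdemAtomic C) {c c' : C}
    (h : ∀ (a : C) (ha : IsIdemAtom a),
      lalgCoord hbC haC hDC ha c = lalgCoord hbC haC hDC ha c') : c = c' :=
  le_antisymm (lalg_le_of_coords hbC haC hDC hAt (fun a ha => (h a ha).le))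
    (lalg_le_of_coords hbC haC hDC hAt (fun a ha => (h a ha).ge))

/-- a nonneg element dominates its coordinate times the atom -/
lemma lalg_coord_lower (hbC : LAlg.IsBounded C) (haC : LAlg.IsArch C) (hDC : DedekindComplete C) {a : C} (hatom : IsIdemAtom a) {w : C} (hw : 0 ≤ w) :
    (lalgCoord hbC haC hDC hatom w) • a ≤ w := by
  have h1 : 0 ≤ w * (1 - a) :=
    lalg_mul_nonneg hw (sub_nonneg.mpr (lalg_atom_le_one hbC hatom))
  have h2 : w * (1 - a) = w - w * a := by ring
  rw [h2] at h1
  have h3 : w * a ≤ w := sub_nonneg.mp h1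
  rw [lalgCoord_spec hbC haC hDC hatom w] at h3
  exact h3

/-- coordinates preserve suprema of nonempty sets -/
lemma lalgCoord_isLUB (hbC : LAlg.IsBounded C) (haC : LAlg.IsArch C) (hDC : DedekindComplete C) {a : C} (hatom : IsIdemAtom a) {S : Set C} {u : C}
    (hSne : S.Nonempty) (hu : IsLUB S u) :
    IsLUB ((fun c => lalgCoord hbC haC hDC hatom c) '' S)
      (lalgCoord hbC haC hDC hatom u) := by
  constructor
  · rintro _ ⟨s, hs, rfl⟩
    exact lalgCoord_mono hbC haC hDC hatom (hu.1 hs)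
  · intro w hw
    by_contra hlt
    push_neg at hlt
    set δ := lalgCoord hbC haC hDC hatom u - w with hδ
    have hδpos : 0 < δ := sub_pos.mpr hlt
    have hub : ∀ s ∈ S, s ≤ u - δ • a := by
      intro s hs
      have hws : 0 ≤ u - s := sub_nonneg.mpr (hu.1 hs)
      have hc : δ ≤ lalgCoord hbC haC hDC hatom (u - s) := by
        have h1 : lalgCoord hbC haC hDC hatom (u - s)
            = lalgCoord hbC haC hDC hatom u - lalgCoord hbC haC hDC hatom s := by
          have h2 := lalgCoord_add hbC haC hDC hatom (u - s) s
          rw [sub_add_cancel] at h2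
          linarith
        have h3 : lalgCoord hbC haC hDC hatom s ≤ w := hw ⟨s, hs, rfl⟩
        rw [h1]; simp only [hδ]; linarith
      have h4 : δ • a ≤ (lalgCoord hbC haC hDC hatom (u - s)) • a :=
        lalg_smul_le_smul hc (lalg_atom_nonneg hbC hatom)
      have h5 : δ • a ≤ u - s := h4.trans (lalg_coord_lower hbC haC hDC hatom hws)
      exact le_sub_comm.mp h5
    have h6 : u ≤ u - δ • a := hu.2 hub
    have h7 : δ • a ≤ 0 := by
      have := sub_nonneg.mpr h6
      rw [sub_sub_cancel_left] at this
      simpa using neg_nonneg.mp this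
    have h8 : (0:C) ≤ δ • a := lalg_smul_nonneg (le_of_lt hδpos) (lalg_atom_nonneg hbC hatom)
    exact hatom.2.1 (lalg_smul_eq_zero (ne_of_gt hδpos) (le_antisymm h7 h8))

/-- distinct atoms multiply to zero -/
lemma lalg_atom_mul_atom {x y : C} (hx : IsIdemAtom x) (hy : IsIdemAtom y)
    (hne : x ≠ y) : x * y = 0 := by
  have hidem : (x * y) * (x * y) = x * y := by
    calc (x * y) * (x * y) = (x * x) * (y * y) := by ring
      _ = x * y := by rw [hx.1, hy.1]
  have hfx : (x * y) * x = x * y := by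
    calc (x * y) * x = (x * x) * y := by ring
      _ = x * y := by rw [hx.1]
  rcases hx.2.2 (x * y) hidem hfx with h | h
  · exact h
  · have hfy : (x * y) * y = x * y := by
      calc (x * y) * y = x * (y * y) := by ring
        _ = x * y := by rw [hy.1]
    rcases hy.2.2 (x * y) hidem hfy with h2 | h2
    · exact h2
    · exact absurd (h ▸ h2 : x = y) hne

/-- realization of a bounded family of coordinates -/
lemma lalg_realize (hbC : LAlg.IsBounded C) (haC : LAlg.IsArch C) (hDC : DedekindComplete C) (hAt : IdemAtomic C) (hnt : (1:C) ≠ 0)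
    (h : {a : C // IsIdemAtom a} → ℝ) (r : ℝ) (hr : ∀ x, |h x| ≤ r) :
    ∃ c : C, ∀ x : {a : C // IsIdemAtom a}, c * x.1 = (h x) • x.1 := by
  classical
  have hr0 : 0 ≤ r := by
    obtain ⟨a0, ha0, _⟩ := hAt 1 (one_mul 1) hnt
    exact (abs_nonneg _).trans (hr ⟨a0, ha0⟩)
  set elt : {a : C // IsIdemAtom a} → C :=
    fun x => (h x) • x.1 + (-r) • (1 - x.1) with helt
  set T := Set.range elt with hT
  obtain ⟨a0, ha0, _⟩ := hAt 1 (one_mul 1) hnt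
  have hTne : T.Nonempty := ⟨elt ⟨a0, ha0⟩, ⟨_, rfl⟩⟩
  have hTbdd : BddAbove T := by
    refine ⟨r • 1, ?_⟩
    rintro _ ⟨x, rfl⟩
    have hx0 := lalg_atom_nonneg hbC x.2
    have hx1 : (0:C) ≤ 1 - x.1 := sub_nonneg.mpr (lalg_atom_le_one hbC x.2)
    have h1 : (h x) • x.1 ≤ r • x.1 :=
      lalg_smul_le_smul ((le_abs_self _).trans (hr x)) hx0
    have h2 : (-r) • (1 - x.1) ≤ r • (1 - x.1) :=
      lalg_smul_le_smul (by linarith) hx1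
    calc elt x ≤ r • x.1 + r • (1 - x.1) := add_le_add h1 h2
      _ = r • 1 := by rw [← smul_add]; congr 1; abel
  obtain ⟨c, hc⟩ := hDC T hTne hTbdd
  refine ⟨c, fun x => ?_⟩
  have hx0 := lalg_atom_nonneg hbC x.2
  have hxidem := x.2.1
  -- coordinates of the elements of T at atom x
  have heltx : ∀ z : {a : C // IsIdemAtom a},
      lalgCoord hbC haC hDC x.2 (elt z) = if z = x then h x else -r := by
    intro z
    by_cases hzx : z = x
    · subst hzx
      rw [if_pos rfl]
      apply lalgCoord_eq
      rw [helt]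
      have : ((h z) • z.1 + (-r) • (1 - z.1)) * z.1
          = (h z) • (z.1 * z.1) + (-r) • ((1 - z.1) * z.1) := by
        rw [add_mul, smul_mul_assoc, smul_mul_assoc]
      rw [this, z.2.1]
      have h1 : (1 - z.1) * z.1 = 0 := by
        rw [sub_mul, one_mul, z.2.1, sub_self]
      rw [h1, smul_zero, add_zero]
    · rw [if_neg hzx]
      apply lalgCoord_eq
      have hzx1 : z.1 * x.1 = 0 :=
        lalg_atom_mul_atom z.2 x.2 (fun hh => hzx (Subtype.ext hh))
      have : (elt z) * x.1 = (h z) • (z.1 * x.1) + (-r) • ((1 - z.1) * x.1) := by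
        rw [helt]; rw [add_mul, smul_mul_assoc, smul_mul_assoc]
      rw [this, hzx1, smul_zero, zero_add, sub_mul, one_mul, hzx1, sub_zero]
  have hcx_ge : h x ≤ lalgCoord hbC haC hDC x.2 c := by
    have h1 := lalgCoord_mono hbC haC hDC x.2 (hc.1 (⟨x, rfl⟩ : elt x ∈ T))
    rw [heltx x, if_pos rfl] at h1
    exact h1
  have hcx_le : lalgCoord hbC haC hDC x.2 c ≤ h x := by
    by_contra hlt
    push_neg at hlt
    set δ := lalgCoord hbC haC hDC x.2 c - h x with hδ
    have hδpos : 0 < δ := sub_pos.mpr hlt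
    have hub : ∀ t ∈ T, t ≤ c - δ • x.1 := by
      rintro _ ⟨z, rfl⟩
      have hwz : 0 ≤ c - elt z := sub_nonneg.mpr (hc.1 ⟨z, rfl⟩)
      have hcoordz : δ ≤ lalgCoord hbC haC hDC x.2 (c - elt z) := by
        have h1 : lalgCoord hbC haC hDC x.2 (c - elt z)
            = lalgCoord hbC haC hDC x.2 c - lalgCoord hbC haC hDC x.2 (elt z) := by
          have h2 := lalgCoord_add hbC haC hDC x.2 (c - elt z) (elt z)
          rw [sub_add_cancel] at h2
          linarith
        have h3 : lalgCoord hbC haC hDC x.2 (elt z) ≤ h x := by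
          rw [heltx z]
          by_cases hzx : z = x
          · rw [if_pos hzx]
          · rw [if_neg hzx]
            have := hr x
            rw [abs_le] at this
            linarith [this.1]
        rw [h1]; simp only [hδ]; linarith
      have h4 : δ • x.1 ≤ c - elt z :=
        (lalg_smul_le_smul hcoordz hx0).trans (lalg_coord_lower hbC haC hDC x.2 hwz)
      exact le_sub_comm.mp h4
    have h6 : c ≤ c - δ • x.1 := hc.2 hub
    have h7 : δ • x.1 ≤ 0 := by
      have := sub_nonneg.mpr h6
      rw [sub_sub_cancel_left] at this
      simpa using neg_nonneg.mp this
    have h8 : (0:C) ≤ δ • x.1 := lalg_smul_nonneg (le_of_lt hδpos) hx0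
    exact x.2.2.1 (lalg_smul_eq_zero (ne_of_gt hδpos) (le_antisymm h7 h8))
  have : lalgCoord hbC haC hDC x.2 c = h x := le_antisymm hcx_le hcx_ge
  rw [lalgCoord_spec hbC haC hDC x.2 c, this]

end CoordHom

section CoordExtra
variable {C : Type*} [LAlg C]

lemma lalgCoord_smul (hbC : LAlg.IsBounded C) (haC : LAlg.IsArch C)
    (hDC : DedekindComplete C) {a : C} (hatom : IsIdemAtom a) (s : ℝ) (c : C) :
    lalgCoord hbC haC hDC hatom (s • c) = s * lalgCoord hbC haC hDC hatom c := by
  rw [Algebra.smul_def, lalgCoord_mul hbC haC hDC hatom,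
    lalgCoord_algebraMap hbC haC hDC hatom]

/-- composition of bal morphisms is bal -/
lemma isBalHom_comp {A B D : Type*} [LAlg A] [LAlg B] [LAlg D]
    {f : B →ₐ[ℝ] D} {g : A →ₐ[ℝ] B} (hf : IsBalHom f) (hg : IsBalHom g) :
    IsBalHom (f.comp g) := by
  intro a b
  simp only [AlgHom.comp_apply, hg a b, hf (g a) (g b)]

/-- the coordinate at an atom as an algebra morphism -/
noncomputable def lalgCoordHom (hbC : LAlg.IsBounded C) (haC : LAlg.IsArch C)
    (hDC : DedekindComplete C) {a : C} (hatom : IsIdemAtom a) : C →ₐ[ℝ] ℝ where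
  toFun := lalgCoord hbC haC hDC hatom
  map_one' := lalgCoord_one hbC haC hDC hatom
  map_mul' := lalgCoord_mul hbC haC hDC hatom
  map_zero' := lalgCoord_zero hbC haC hDC hatom
  map_add' := lalgCoord_add hbC haC hDC hatom
  commutes' := fun s => by
    simpa using lalgCoord_algebraMap hbC haC hDC hatom s

lemma lalgCoordHom_bal (hbC : LAlg.IsBounded C) (haC : LAlg.IsArch C)
    (hDC : DedekindComplete C) {a : C} (hatom : IsIdemAtom a) :
    IsBalHom (lalgCoordHom hbC haC hDC hatom) :=
  fun c c' => lalgCoord_sup hbC haC hDC hatom c c'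

end CoordExtra
section BddFunsFacts
variable {Y : Type*}

lemma bddFuns_le_iff (g g' : BddFuns Y) : g ≤ g' ↔ ∀ y, g.1 y ≤ g'.1 y := Iff.rfl

lemma bddFuns_sup_coe (g g' : BddFuns Y) : (g ⊔ g').1 = g.1 ⊔ g'.1 := rfl
lemma bddFuns_add_coe (g g' : BddFuns Y) : (g + g').1 = g.1 + g'.1 := rfl
lemma bddFuns_mul_coe (g g' : BddFuns Y) : (g * g').1 = g.1 * g'.1 := rfl
lemma bddFuns_one_coe : ((1 : BddFuns Y)).1 = 1 := rfl
lemma bddFuns_zero_coe : ((0 : BddFuns Y)).1 = 0 := rfl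
lemma bddFuns_smul_coe (r : ℝ) (g : BddFuns Y) : (r • g).1 = r • g.1 := rfl
lemma bddFuns_nsmul_coe (n : ℕ) (g : BddFuns Y) : (n • g).1 = n • g.1 := rfl
lemma bddFuns_sub_coe (g g' : BddFuns Y) : (g - g').1 = g.1 - g'.1 := rfl
lemma bddFuns_neg_coe (g : BddFuns Y) : (-g).1 = -g.1 := rfl

lemma bddFuns_isLUB_pointwise {S : Set (BddFuns Y)} {u : BddFuns Y}
    (hne : S.Nonempty) (hu : IsLUB S u) (y : Y) :
    IsLUB ((fun g : BddFuns Y => g.1 y) '' S) (u.1 y) := by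
  classical
  constructor
  · rintro _ ⟨g, hg, rfl⟩
    exact hu.1 hg y
  · intro w hw
    set σ := sSup ((fun g : BddFuns Y => g.1 y) '' S) with hσ
    have hne' : ((fun g : BddFuns Y => g.1 y) '' S).Nonempty := hne.image _
    have hbdd' : BddAbove ((fun g : BddFuns Y => g.1 y) '' S) := ⟨u.1 y, by
      rintro _ ⟨g, hg, rfl⟩; exact hu.1 hg y⟩
    have hσw : σ ≤ w := csSup_le hne' hw
    -- modified function
    set u' : Y → ℝ := fun y' => if y' = y then σ else u.1 y' with hu'
    have hu'mem : u' ∈ BddFuns Y := by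
      obtain ⟨ru, hru⟩ := u.2
      obtain ⟨g0, hg0⟩ := hne
      obtain ⟨r0, hr0⟩ := g0.2
      refine ⟨|σ| + ru, fun y' => ?_⟩
      by_cases hy : y' = y
      · simp only [hu', if_pos hy]
        have : (0:ℝ) ≤ ru := (abs_nonneg _).trans (hru y)
        linarith [le_abs_self σ, neg_abs_le σ]
      · simp only [hu', if_neg hy]
        have := hru y'
        have : |u.1 y'| ≤ ru := hru y'
        have h0 : (0:ℝ) ≤ |σ| := abs_nonneg σ
        linarith
    have hub' : u ≤ ⟨u', hu'mem⟩ := by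
      have hub2 : (⟨u', hu'mem⟩ : BddFuns Y) ∈ upperBounds S := by
        intro g hg y'
        by_cases hy : y' = y
        · show g.1 y' ≤ u' y'
          simp only [hu', if_pos hy]
          subst hy
          exact le_csSup hbdd' ⟨g, hg, rfl⟩
        · show g.1 y' ≤ u' y'
          simp only [hu', if_neg hy]
          exact hu.1 hg y'
      exact hu.2 hub2
    have := hub' y
    simp only [hu', if_pos rfl] at this
    exact this.trans hσw

lemma bddFuns_dedekind : DedekindComplete (BddFuns Y) := by
  intro S hne hbdd
  obtain ⟨u0, hu0⟩ := hbdd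
  obtain ⟨g0, hg0⟩ := hne
  have hbddy : ∀ y, BddAbove ((fun g : BddFuns Y => g.1 y) '' S) := fun y =>
    ⟨u0.1 y, by rintro _ ⟨g, hg, rfl⟩; exact hu0 hg y⟩
  have hney : ∀ y, ((fun g : BddFuns Y => g.1 y) '' S).Nonempty := fun y => ⟨g0.1 y, ⟨g0, hg0, rfl⟩⟩
  set v : Y → ℝ := fun y => sSup ((fun g : BddFuns Y => g.1 y) '' S) with hv
  have hvmem : v ∈ BddFuns Y := by
    obtain ⟨ru, hru⟩ := u0.2
    obtain ⟨r0, hr0⟩ := g0.2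
    refine ⟨ru + r0, fun y => ?_⟩
    have h1 : v y ≤ u0.1 y := csSup_le (hney y) (by rintro _ ⟨g, hg, rfl⟩; exact hu0 hg y)
    have h2 : g0.1 y ≤ v y := le_csSup (hbddy y) ⟨g0, hg0, rfl⟩
    have h3 := hru y; have h4 := hr0 y
    rw [abs_le] at h3 h4 ⊢
    have h5 : (0:ℝ) ≤ r0 := (abs_nonneg _).trans (hr0 y)
    have h6 : (0:ℝ) ≤ ru := (abs_nonneg _).trans (hru y)
    constructor
    · linarith [h4.1]
    · linarith [h3.2]
  refine ⟨⟨v, hvmem⟩, ?_, ?_⟩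
  · intro g hg y
    exact le_csSup (hbddy y) ⟨g, hg, rfl⟩
  · intro w hw y
    exact csSup_le (hney y) (by rintro _ ⟨g, hg, rfl⟩; exact hw hg y)

lemma bddFuns_bounded : LAlg.IsBounded (BddFuns Y) := by
  intro g
  obtain ⟨r, hr⟩ := g.2
  refine ⟨⌈r⌉₊, fun y => ?_⟩
  have h1 : g.1 y ≤ r := (le_abs_self _).trans (hr y)
  have h2 : r ≤ (⌈r⌉₊ : ℝ) := Nat.le_ceil r
  show g.1 y ≤ (⌈r⌉₊ • (1:BddFuns Y)).1 y
  have hcoe : (⌈r⌉₊ • (1:BddFuns Y)).1 y = (⌈r⌉₊ : ℝ) := by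
    rw [bddFuns_nsmul_coe]
    simp
  rw [hcoe]
  linarith

lemma bddFuns_arch : LAlg.IsArch (BddFuns Y) := by
  intro g h hgh y
  by_contra hpos
  push_neg at hpos
  have hpos' : 0 < g.1 y := hpos
  obtain ⟨rh, hrh⟩ := h.2
  obtain ⟨n, hn⟩ := exists_nat_gt (rh / g.1 y)
  have h1 : (n • g).1 y ≤ h.1 y := hgh n y
  rw [bddFuns_nsmul_coe] at h1
  have h1' : (n : ℝ) * g.1 y ≤ h.1 y := by
    simpa [nsmul_eq_mul] using h1
  have h2 : (n : ℝ) * g.1 y ≤ rh := h1'.trans ((le_abs_self _).trans (hrh y))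
  have h3 : rh / g.1 y < (n:ℝ) := hn
  have := (div_lt_iff₀ hpos').mp h3
  linarith

open Classical in
/-- indicator function of a point -/
noncomputable def bddIndicator (y₀ : Y) : BddFuns Y :=
  ⟨fun y => if y = y₀ then (1:ℝ) else 0, ⟨1, fun y => by dsimp only; split <;> simp⟩⟩

lemma bddIndicator_idem (y₀ : Y) : bddIndicator y₀ * bddIndicator y₀ = bddIndicator y₀ := by
  apply Subtype.ext
  funext y
  show (bddIndicator y₀).1 y * (bddIndicator y₀).1 y = (bddIndicator y₀).1 y
  simp only [bddIndicator]
  split <;> simp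

lemma bddIndicator_ne_zero (y₀ : Y) : bddIndicator y₀ ≠ 0 := by
  intro h
  have := congrFun (congrArg Subtype.val h) y₀
  simp [bddIndicator] at this

lemma bddFuns_idem_pointwise {e : BddFuns Y} (he : e * e = e) (y : Y) :
    e.1 y = 0 ∨ e.1 y = 1 := by
  have := congrFun (congrArg Subtype.val he) y
  have h1 : e.1 y * e.1 y = e.1 y := this
  have h2 : e.1 y * (e.1 y - 1) = 0 := by nlinarith [h1]
  rcases mul_eq_zero.mp h2 with h | h
  · left; exact h
  · right; linarith [sub_eq_zero.mp h]

lemma bddFuns_atomic : IdemAtomic (BddFuns Y) := by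
  classical
  intro e he hne
  have hex : ∃ y₀, e.1 y₀ = 1 := by
    by_contra hno
    push_neg at hno
    apply hne
    apply Subtype.ext; funext y
    rcases bddFuns_idem_pointwise he y with h | h
    · exact h
    · exact absurd h (hno y)
  obtain ⟨y₀, hy₀⟩ := hex
  refine ⟨bddIndicator y₀, ⟨bddIndicator_idem y₀, bddIndicator_ne_zero y₀, ?_⟩, ?_⟩
  · intro f hf hfa
    rcases bddFuns_idem_pointwise hf y₀ with h | h
    · left
      apply Subtype.ext; funext y
      have h2 := congrFun (congrArg Subtype.val hfa) y
      show f.1 y = 0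
      by_cases hy : y = y₀
      · rw [hy]; exact h
      · have : f.1 y * (bddIndicator y₀).1 y = f.1 y := h2
        simp only [bddIndicator, if_neg hy] at this
        rw [mul_zero] at this
        exact this.symm
    · right
      apply Subtype.ext; funext y
      have h2 := congrFun (congrArg Subtype.val hfa) y
      show f.1 y = (bddIndicator y₀).1 y
      by_cases hy : y = y₀
      · subst hy; simp only [bddIndicator, if_pos rfl]; exact h
      · simp only [bddIndicator, if_neg hy]
        have : f.1 y * (bddIndicator y₀).1 y = f.1 y := h2
        simp only [bddIndicator, if_neg hy] at this
        rw [mul_zero] at this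
        exact this.symm
  · apply Subtype.ext; funext y
    show (bddIndicator y₀).1 y * e.1 y = (bddIndicator y₀).1 y
    simp only [bddIndicator]
    by_cases hy : y = y₀
    · subst hy; rw [if_pos rfl, hy₀, one_mul]
    · rw [if_neg hy, zero_mul]

lemma bddFuns_isBasic : IsBasic (BddFuns Y) :=
  ⟨bddFuns_bounded, bddFuns_arch, bddFuns_dedekind, bddFuns_atomic⟩

/-- g · χ_{y₀} = g(y₀) · χ_{y₀} -/
lemma bddFuns_mul_indicator (g : BddFuns Y) (y₀ : Y) :
    g * bddIndicator y₀ = (g.1 y₀) • bddIndicator y₀ := by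
  classical
  apply Subtype.ext; funext y
  show g.1 y * (bddIndicator y₀).1 y = g.1 y₀ * (bddIndicator y₀).1 y
  simp only [bddIndicator]
  by_cases hy : y = y₀
  · subst hy; rw [if_pos rfl]
  · rw [if_neg hy, mul_zero, mul_zero]

/-- the indicators have supremum 1 -/
lemma bddFuns_isLUB_indicators :
    IsLUB (Set.range (fun y : Y => bddIndicator y)) (1 : BddFuns Y) := by
  classical
  constructor
  · rintro _ ⟨y, rfl⟩ y'
    show (if y' = y then (1:ℝ) else 0) ≤ 1
    split <;> norm_num
  · intro w hw y
    have := hw ⟨y, rfl⟩ y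
    simpa [bddIndicator] using this

end BddFunsFacts
/-- B(Y_A) is a basic algebra and e : A → B(Y_A) has the universal
property of the reflection of A into basic algebras: every bal-morphism from A to a
basic algebra C factors uniquely through e via a normal homomorphism.  Hence the
basic algebras form a (non-full) reflective subcategory of bal, with reflector the
canonical extension A ↦ B(Y_A). -/
theorem stmt15 (A : Type) [LAlg A] (hb : LAlg.IsBounded A) (ha : LAlg.IsArch A) :
    IsBasic (BddFuns (YosidaSpace A)) ∧
    ∀ (C : Type) [LAlg C], IsBasic C →
      ∀ α : A →ₐ[ℝ] C, IsBalHom α →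
        ∃! γ : BddFuns (YosidaSpace A) →ₐ[ℝ] C,
          IsNormal γ ∧ ∀ a : A, γ (eMap A hb a) = α a := by
  refine ⟨bddFuns_isBasic, ?_⟩
  intro C _ hC α hα
  obtain ⟨hbC, haC, hDC, hAt⟩ := hC
  by_cases hnt : (1:C) = 0
  · -- trivial case: C is the zero ring
    have hall : ∀ c : C, c = 0 := fun c => by
      calc c = c * 1 := (mul_one c).symm
        _ = c * 0 := by rw [hnt]
        _ = 0 := mul_zero c
    have hall2 : ∀ c c' : C, c ≤ c' := fun c c' =>
      le_of_eq ((hall c).trans (hall c').symm)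
    refine ⟨{ toFun := fun _ => (0:C), map_one' := (hall 1).symm,
              map_mul' := fun _ _ => by rw [mul_zero],
              map_zero' := rfl,
              map_add' := fun _ _ => by rw [add_zero],
              commutes' := fun r => (hall _).symm }, ⟨⟨?_, ?_, ?_⟩, ?_⟩, ?_⟩
    · intro g g'
      show (0:C) = 0 ⊔ 0
      rw [sup_idem]
    · intro S u _
      constructor
      · rintro _ ⟨s, _, rfl⟩
        exact hall2 _ _
      · intro w _
        exact hall2 _ _
    · intro S u _
      constructor
      · rintro _ ⟨s, _, rfl⟩
        exact hall2 _ _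
      · intro w _
        exact hall2 _ _
    · intro a
      exact (hall (α a)).symm
    · intro γ' _
      apply AlgHom.ext
      intro g
      exact le_antisymm (hall2 _ _) (hall2 _ _)
  · -- main case
    obtain ⟨a₀, ha₀, _⟩ := hAt 1 (one_mul 1) hnt
    -- the set of atoms of C
    -- the point map φ : atoms → Yosida space
    set φ : {a : C // IsIdemAtom a} → YosidaSpace A := fun x =>
      ⟨(lalgCoordHom hbC haC hDC x.2).comp α,
        isBalHom_comp (lalgCoordHom_bal hbC haC hDC x.2) hα⟩ with hφ
    -- realization of γ₀
    have hreal : ∀ g : BddFuns (YosidaSpace A),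
        ∃ c : C, ∀ x : {a : C // IsIdemAtom a}, c * x.1 = (g.1 (φ x)) • x.1 := by
      intro g
      obtain ⟨r, hr⟩ := g.2
      exact lalg_realize hbC haC hDC hAt hnt (fun x => g.1 (φ x)) r (fun x => hr (φ x))
    choose γ₀ hγ₀ using hreal
    have hcoordγ : ∀ (g : BddFuns (YosidaSpace A)) (x : {a : C // IsIdemAtom a}),
        lalgCoord hbC haC hDC x.2 (γ₀ g) = g.1 (φ x) :=
      fun g x => lalgCoord_eq hbC haC hDC x.2 (hγ₀ g x)
    have hext : ∀ {c c' : C},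
        (∀ x : {a : C // IsIdemAtom a},
          lalgCoord hbC haC hDC x.2 c = lalgCoord hbC haC hDC x.2 c') → c = c' := by
      intro c c' h
      exact lalg_eq_of_coords hbC haC hDC hAt (fun a hA => h ⟨a, hA⟩)
    have hlecoord : ∀ {c c' : C},
        (∀ x : {a : C // IsIdemAtom a},
          lalgCoord hbC haC hDC x.2 c ≤ lalgCoord hbC haC hDC x.2 c') → c ≤ c' := by
      intro c c' h
      exact lalg_le_of_coords hbC haC hDC hAt (fun a hA => h ⟨a, hA⟩)
    -- homomorphism properties of γ₀
    have hone : γ₀ 1 = 1 := by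
      apply hext; intro x
      rw [hcoordγ, lalgCoord_one hbC haC hDC x.2]
      rfl
    have hmul : ∀ g g', γ₀ (g * g') = γ₀ g * γ₀ g' := by
      intro g g'
      apply hext; intro x
      rw [hcoordγ, lalgCoord_mul hbC haC hDC x.2, hcoordγ, hcoordγ]
      rfl
    have hadd : ∀ g g', γ₀ (g + g') = γ₀ g + γ₀ g' := by
      intro g g'
      apply hext; intro x
      rw [hcoordγ, lalgCoord_add hbC haC hDC x.2, hcoordγ, hcoordγ]
      rfl
    have hzero : γ₀ 0 = 0 := by
      apply hext; intro x
      rw [hcoordγ, lalgCoord_zero hbC haC hDC x.2]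
      rfl
    have hcomm : ∀ s : ℝ, γ₀ ((algebraMap ℝ (BddFuns (YosidaSpace A))) s)
        = (algebraMap ℝ C) s := by
      intro s
      apply hext; intro x
      rw [hcoordγ, lalgCoord_algebraMap hbC haC hDC x.2]
      rfl
    have hsup : ∀ g g', γ₀ (g ⊔ g') = γ₀ g ⊔ γ₀ g' := by
      intro g g'
      apply hext; intro x
      rw [hcoordγ, lalgCoord_sup hbC haC hDC x.2, hcoordγ, hcoordγ]
      rfl
    have hmono : ∀ {g g'}, g ≤ g' → γ₀ g ≤ γ₀ g' := by
      intro g g' hgg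
      have := hsup g g'
      rw [sup_eq_right.mpr hgg] at this
      rw [this]
      exact le_sup_left
    have hcompe : ∀ a : A, γ₀ (eMap A hb a) = α a := by
      intro a
      apply hext; intro x
      rw [hcoordγ]
      rfl
    -- sup preservation
    have hLUB : ∀ (S : Set (BddFuns (YosidaSpace A))) (u : BddFuns (YosidaSpace A)),
        IsLUB S u → IsLUB (γ₀ '' S) (γ₀ u) := by
      intro S u hu
      rcases S.eq_empty_or_nonempty with hS | hS
      · exfalso
        subst hS
        have hub : ∀ b, u ≤ b := fun b => hu.2 (fun z hz => absurd hz (Set.notMem_empty z))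
        have h1 := hub (u - 1) (φ ⟨a₀, ha₀⟩)
        have h2 : u.1 (φ ⟨a₀, ha₀⟩) ≤ u.1 (φ ⟨a₀, ha₀⟩) - 1 := h1
        linarith
      · constructor
        · rintro _ ⟨g, hg, rfl⟩
          exact hmono (hu.1 hg)
        · intro w hw
          apply hlecoord
          intro x
          rw [hcoordγ]
          have hptw := bddFuns_isLUB_pointwise hS hu (φ x)
          apply hptw.2
          rintro _ ⟨g, hg, rfl⟩
          have h1 : γ₀ g ≤ w := hw ⟨g, hg, rfl⟩
          have h2 := lalgCoord_mono hbC haC hDC x.2 h1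
          rwa [hcoordγ] at h2
    have hGLB : ∀ (S : Set (BddFuns (YosidaSpace A))) (u : BddFuns (YosidaSpace A)),
        IsGLB S u → IsGLB (γ₀ '' S) (γ₀ u) := by
      intro S u hu
      rcases S.eq_empty_or_nonempty with hS | hS
      · exfalso
        subst hS
        have hub : ∀ b, b ≤ u := fun b => hu.2 (fun z hz => absurd hz (Set.notMem_empty z))
        have h1 := hub (u + 1) (φ ⟨a₀, ha₀⟩)
        have h2 : u.1 (φ ⟨a₀, ha₀⟩) + 1 ≤ u.1 (φ ⟨a₀, ha₀⟩) := h1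
        linarith
      · -- uses the negated LUB
        have hneg : IsLUB (Neg.neg '' S) (-u) := by
          constructor
          · rintro _ ⟨g, hg, rfl⟩
            exact neg_le_neg (hu.1 hg)
          · intro w hw
            have h1 : ∀ g ∈ S, -w ≤ g := by
              intro g hg
              have := hw ⟨g, hg, rfl⟩
              exact neg_le.mp (by simpa using this)
            have h2 : -w ≤ u := hu.2 h1
            exact neg_le.mp (by simpa using h2)
        constructor
        · rintro _ ⟨g, hg, rfl⟩
          exact hmono (hu.1 hg)
        · intro w hw
          apply hlecoord
          intro x
          rw [hcoordγ]
          have hptw := bddFuns_isLUB_pointwise (hS.image _) hneg (φ x)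
          -- hptw : IsLUB ((fun g => g.1 (φ x)) '' (Neg.neg '' S)) ((-u).1 (φ x))
          have hkey : -(u.1 (φ x)) ≤ -(lalgCoord hbC haC hDC x.2 w) := by
            apply hptw.2
            rintro _ ⟨_, ⟨g, hg, rfl⟩, rfl⟩
            show (-g).1 (φ x) ≤ -(lalgCoord hbC haC hDC x.2 w)
            have h1 : w ≤ γ₀ g := hw ⟨g, hg, rfl⟩
            have h2 := lalgCoord_mono hbC haC hDC x.2 h1
            rw [hcoordγ] at h2
            have : (-g).1 (φ x) = -(g.1 (φ x)) := rfl
            rw [this]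
            linarith
          linarith
    -- uniqueness
    have huniq : ∀ (γ' : BddFuns (YosidaSpace A) →ₐ[ℝ] C), IsNormal γ' →
        (∀ a : A, γ' (eMap A hb a) = α a) → ∀ g, γ' g = γ₀ g := by
      intro γ' hn' hcomp' g
      obtain ⟨hbal', hlub', _⟩ := hn'
      apply hext
      intro x
      rw [hcoordγ]
      -- the composite ψ = coord_x ∘ γ' is evaluation at some point y₀
      set ψ : BddFuns (YosidaSpace A) → ℝ :=
        fun g' => lalgCoord hbC haC hDC x.2 (γ' g') with hψ
      have hψ1 : ψ 1 = 1 := by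
        simp only [hψ, map_one]; exact lalgCoord_one hbC haC hDC x.2
      -- indicators
      have hlubInd := hlub' _ _ (bddFuns_isLUB_indicators (Y := YosidaSpace A))
      rw [map_one] at hlubInd
      have hIndNe : (Set.range (fun y : YosidaSpace A => bddIndicator y)).Nonempty :=
        ⟨bddIndicator (φ x), ⟨φ x, rfl⟩⟩
      have hlubψ := lalgCoord_isLUB hbC haC hDC x.2 (hIndNe.image _) hlubInd
      rw [lalgCoord_one hbC haC hDC x.2] at hlubψ
      have hidem : ∀ y : YosidaSpace A, ψ (bddIndicator y) = 0 ∨ ψ (bddIndicator y) = 1 := by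
        intro y
        have h1 : ψ (bddIndicator y) * ψ (bddIndicator y) = ψ (bddIndicator y) := by
          rw [hψ]
          rw [← lalgCoord_mul hbC haC hDC x.2, ← map_mul, bddIndicator_idem]
        have h2 : ψ (bddIndicator y) * (ψ (bddIndicator y) - 1) = 0 := by nlinarith [h1]
        rcases mul_eq_zero.mp h2 with h | h
        · left; exact h
        · right; linarith [sub_eq_zero.mp h]
      have hex1 : ∃ y₀ : YosidaSpace A, ψ (bddIndicator y₀) = 1 := by
        by_contra hno
        push_neg at hno
        have hall0 : ∀ z ∈ (fun c => lalgCoord hbC haC hDC x.2 c) ''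
            (γ' '' Set.range (fun y : YosidaSpace A => bddIndicator y)), z ≤ 0 := by
          rintro _ ⟨_, ⟨_, ⟨y, rfl⟩, rfl⟩, rfl⟩
          rcases hidem y with h | h
          · exact le_of_eq h
          · exact absurd h (hno y)
        have := hlubψ.2 hall0
        linarith
      obtain ⟨y₀, hy₀⟩ := hex1
      -- ψ is evaluation at y₀
      have hψeval : ∀ g' : BddFuns (YosidaSpace A), ψ g' = g'.1 y₀ := by
        intro g'
        have h1 := bddFuns_mul_indicator g' y₀
        have h2 : ψ (g' * bddIndicator y₀) = ψ g' * ψ (bddIndicator y₀) := by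
          simp only [hψ]
          rw [map_mul]
          exact lalgCoord_mul hbC haC hDC x.2 _ _
        have h3 : ψ ((g'.1 y₀) • bddIndicator y₀) = g'.1 y₀ * ψ (bddIndicator y₀) := by
          simp only [hψ]
          rw [map_smul]
          exact lalgCoord_smul hbC haC hDC x.2 _ _
        rw [h1, h3, hy₀, mul_one] at h2
        rw [mul_one] at h2
        exact h2.symm
      -- y₀ = φ x
      have hy₀eq : y₀ = φ x := by
        apply Subtype.ext
        apply AlgHom.ext
        intro a
        have h1 : (eMap A hb a).1 y₀ = y₀.1 a := rfl
        have h2 := hψeval (eMap A hb a)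
        rw [h1] at h2
        have h3 : ψ (eMap A hb a) = lalgCoord hbC haC hDC x.2 (α a) := by
          simp only [hψ]
          rw [hcomp' a]
        rw [h3] at h2
        exact h2.symm
      have := hψeval g
      rw [hy₀eq] at this
      exact this
    -- assemble
    refine ⟨{ toFun := γ₀, map_one' := hone, map_mul' := hmul,
              map_zero' := hzero, map_add' := hadd, commutes' := hcomm },
      ⟨⟨?_, ?_, ?_⟩, ?_⟩, ?_⟩
    · intro g g'
      exact hsup g g'
    · intro S u hu
      exact hLUB S u hu
    · intro S u hu
      exact hGLB S u hu
    · intro a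
      exact hcompe a
    · intro γ' hγ'
      apply AlgHom.ext
      intro g
      exact huniq γ' hγ'.1 hγ'.2 g
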